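/- Let μ₁ and μ₂ be finite nonnegative Borel measures on ℝ, and let ‖μ₁ − μ₂‖ = sup{ |∫f dμ₁ − ∫f dμ₂| : f : ℝ → ℝ Borel measurable with ‖f‖_∞ ≤ 1 } denote the total variation distance. Then ‖μ₁ − μ₂‖ = sup{ |∫f dμ₁ − ∫f dμ₂| : f ∈ C²_b(ℝ), ‖f‖_∞ ≤ 1 }. -/

import Mathlib

open MeasureTheory Real Filter
open scoped Convolution

/-- `f` is in `C²_b(ℝ)`: twice continuously differentiable with `f`, `f'`, `f''` bounded. -/
def C2b (f : ℝ → ℝ) : Prop :=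
  ContDiff ℝ 2 f ∧ (∃ C, ∀ x, |f x| ≤ C) ∧ (∃ C, ∀ x, |deriv f x| ≤ C) ∧
    (∃ C, ∀ x, |deriv (deriv f) x| ≤ C)

private lemma clamp_close (a b : ℝ) (ha : |a| ≤ 1) :
    |a - max (-1) (min 1 b)| ≤ |a - b| := by
  rw [abs_le] at ha
  rcases le_total b (-1) with h | h
  · rw [min_eq_right (by linarith), max_eq_left h, abs_of_nonneg (by linarith),
      abs_of_nonneg (by linarith)]
    linarith
  · rcases le_total 1 b with h2 | h2
    · rw [min_eq_left h2, max_eq_right (by norm_num), abs_of_nonpos (by linarith),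
        abs_of_nonpos (by linarith)]
      linarith
    · rw [min_eq_right h2, max_eq_right (by linarith)]

private lemma bdd_of_cpt {k : ℝ → ℝ} (hk : Continuous k) (hks : HasCompactSupport k) :
    ∃ C, ∀ x, |k x| ≤ C := by
  obtain ⟨C, hC⟩ := (hk.abs).bounded_above_of_compact_support (hks.abs)
  exact ⟨C, fun x => by simpa using hC x⟩


set_option maxHeartbeats 1000000 in
private lemma smooth_approx {g : ℝ → ℝ} (hgc : Continuous g) (hgs : HasCompactSupport g)
    (hgb : ∀ x, |g x| ≤ 1) {δ : ℝ} (hδ : 0 < δ) :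
    ∃ h : ℝ → ℝ, (∀ n : ℕ∞, ContDiff ℝ n h) ∧ HasCompactSupport h ∧ (∀ x, |h x| ≤ 1) ∧
      ∀ x, |h x - g x| ≤ δ := by
  have huc : UniformContinuous g := hgs.uniformContinuous_of_continuous hgc
  obtain ⟨r, hr, hruc⟩ := Metric.uniformContinuous_iff.mp huc δ hδ
  set φ : ContDiffBump (0 : ℝ) := ⟨r / 2, r, by positivity, by linarith⟩ with hφdef
  refine ⟨ContDiffBump.normed φ MeasureTheory.volume
      ⋆[ContinuousLinearMap.lsmul ℝ ℝ, MeasureTheory.volume] g, ?_, ?_, ?_, ?_⟩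
  · intro n
    exact HasCompactSupport.contDiff_convolution_left _ φ.hasCompactSupport_normed
      φ.contDiff_normed hgc.locallyIntegrable
  · exact HasCompactSupport.convolution _ φ.hasCompactSupport_normed hgs
  · intro x
    have := dist_convolution_le (μ := MeasureTheory.volume) (x₀ := x) (z₀ := (0:ℝ))
      zero_le_one (le_of_eq φ.support_normed_eq) φ.nonneg_normed φ.integral_normed
      hgc.aestronglyMeasurable (fun y _ => by simpa [Real.dist_eq] using hgb y)
    simpa [Real.dist_eq] using this
  · intro x
    have : dist ((ContDiffBump.normed φ MeasureTheory.volume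
        ⋆[ContinuousLinearMap.lsmul ℝ ℝ, MeasureTheory.volume] g) x) (g x) ≤ δ := by
      refine ContDiffBump.dist_normed_convolution_le hgc.aestronglyMeasurable ?_
      intro y hy
      exact le_of_lt (hruc (by simpa [Metric.mem_ball] using hy))
    simpa [Real.dist_eq] using this

set_option maxHeartbeats 1000000 in
theorem stmt14 (μ₁ μ₂ : Measure ℝ) [IsFiniteMeasure μ₁] [IsFiniteMeasure μ₂] :
    sSup {d : ℝ | ∃ f : ℝ → ℝ, Measurable f ∧ (∀ x, |f x| ≤ 1) ∧
        d = |(∫ x, f x ∂μ₁) - ∫ x, f x ∂μ₂|} =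
      sSup {d : ℝ | ∃ f : ℝ → ℝ, C2b f ∧ (∀ x, |f x| ≤ 1) ∧
        d = |(∫ x, f x ∂μ₁) - ∫ x, f x ∂μ₂|} := by
  set S1 := {d : ℝ | ∃ f : ℝ → ℝ, Measurable f ∧ (∀ x, |f x| ≤ 1) ∧
      d = |(∫ x, f x ∂μ₁) - ∫ x, f x ∂μ₂|} with hS1
  set S2 := {d : ℝ | ∃ f : ℝ → ℝ, C2b f ∧ (∀ x, |f x| ≤ 1) ∧
      d = |(∫ x, f x ∂μ₁) - ∫ x, f x ∂μ₂|} with hS2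
  -- basic integrability for bounded measurable functions
  have int_of : ∀ (f : ℝ → ℝ) (μ : Measure ℝ) [IsFiniteMeasure μ], AEStronglyMeasurable f μ →
      (∀ x, |f x| ≤ 1) → Integrable f μ := by
    intro f μ _ hm hb
    exact ⟨hm, HasFiniteIntegral.of_bounded (C := 1) (Filter.Eventually.of_forall hb)⟩
  have abs_int_le : ∀ (f : ℝ → ℝ) (μ : Measure ℝ) [IsFiniteMeasure μ],
      AEStronglyMeasurable f μ → (∀ x, |f x| ≤ 1) → |∫ x, f x ∂μ| ≤ (μ Set.univ).toReal := by
    intro f μ _ hm hb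
    calc |∫ x, f x ∂μ| ≤ ∫ x, |f x| ∂μ := by
          simpa using norm_integral_le_integral_norm f (μ := μ)
      _ ≤ ∫ _x, (1 : ℝ) ∂μ := by
          refine integral_mono ((int_of f μ hm hb).abs) (integrable_const 1) hb
      _ = (μ Set.univ).toReal := by simp [Measure.real]
  have hbdd1 : BddAbove S1 := by
    refine ⟨(μ₁ Set.univ).toReal + (μ₂ Set.univ).toReal, ?_⟩
    rintro d ⟨f, hm, hb, rfl⟩
    calc |(∫ x, f x ∂μ₁) - ∫ x, f x ∂μ₂| ≤ |∫ x, f x ∂μ₁| + |∫ x, f x ∂μ₂| := abs_sub _ _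
      _ ≤ _ := add_le_add (abs_int_le f μ₁ hm.aestronglyMeasurable hb)
          (abs_int_le f μ₂ hm.aestronglyMeasurable hb)
  have hz2 : (0 : ℝ) ∈ S2 := by
    refine ⟨fun _ => (0:ℝ), ⟨contDiff_const, ⟨0, by simp⟩, ⟨0, by simp [deriv_const']⟩,
      ⟨0, by simp [deriv_const']⟩⟩, by simp, by simp⟩
  have hsub : S2 ⊆ S1 := by
    rintro d ⟨f, ⟨hf, _⟩, hb, rfl⟩
    exact ⟨f, hf.continuous.measurable, hb, rfl⟩
  have hbdd2 : BddAbove S2 := hbdd1.mono hsub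
  refine le_antisymm ?_ (csSup_le_csSup hbdd1 ⟨0, hz2⟩ hsub)
  refine csSup_le ⟨0, hsub hz2⟩ ?_
  rintro d ⟨f, hm, hb, rfl⟩
  refine le_of_forall_pos_le_add ?_
  intro ε hε
  set ν := μ₁ + μ₂ with hν
  have hνfin : IsFiniteMeasure ν := by infer_instance
  have hfν : Integrable f ν := int_of f ν hm.aestronglyMeasurable hb
  obtain ⟨g, hgsupp, hgapprox, hgcont, -⟩ :=
    hfν.exists_hasCompactSupport_integral_sub_le (ε := ε / 4) (by positivity)
  set g₂ : ℝ → ℝ := fun x => max (-1) (min 1 (g x)) with hg₂def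
  have hg₂cont : Continuous g₂ := continuous_const.max (continuous_const.min hgcont)
  have hg₂supp : HasCompactSupport g₂ := by
    have : g₂ = (fun y => max (-1) (min 1 y)) ∘ g := rfl
    rw [this]
    exact hgsupp.comp_left (by norm_num)
  have hg₂b : ∀ x, |g₂ x| ≤ 1 := by
    intro x
    rw [abs_le]
    exact ⟨le_max_left _ _, max_le (by norm_num) (min_le_left _ _)⟩
  have hfg₂ : ∫ x, ‖f x - g₂ x‖ ∂ν ≤ ε / 4 := by
    refine le_trans ?_ hgapprox
    refine integral_mono ((hfν.sub (hg₂cont.integrable_of_hasCompactSupport hg₂supp)).norm)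
      ((hfν.sub (hgcont.integrable_of_hasCompactSupport hgsupp)).norm) ?_
    intro x
    simpa using clamp_close (f x) (g x) (hb x)
  -- δ and uniform continuity
  set δ : ℝ := ε / (4 * ((ν Set.univ).toReal + 1)) with hδdef
  have hδpos : 0 < δ := by
    have : (0:ℝ) ≤ (ν Set.univ).toReal := ENNReal.toReal_nonneg
    positivity
  obtain ⟨h, hhsmooth, hhsupp, hhb, hhg₂⟩ := smooth_approx hg₂cont hg₂supp hg₂b hδpos
  have hhcont : Continuous h := (hhsmooth 2).continuous
  have hC2b : C2b h := by
    refine ⟨by exact_mod_cast hhsmooth 2, bdd_of_cpt hhcont hhsupp, ?_, ?_⟩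
    · exact bdd_of_cpt (((hhsmooth ⊤).iterate_deriv 1).continuous) hhsupp.deriv
    · have : deriv (deriv h) = deriv^[2] h := rfl
      rw [this]
      exact bdd_of_cpt (((hhsmooth ⊤).iterate_deriv 2).continuous) hhsupp.deriv.deriv
  -- integral estimates
  have hg₂h : ∫ x, ‖g₂ x - h x‖ ∂ν ≤ ε / 4 := by
    have hint : Integrable (fun x => ‖g₂ x - h x‖) ν :=
      ((hg₂cont.integrable_of_hasCompactSupport hg₂supp).sub
        (hhcont.integrable_of_hasCompactSupport hhsupp)).norm
    calc ∫ x, ‖g₂ x - h x‖ ∂ν ≤ ∫ _x, δ ∂ν := by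
          refine integral_mono hint (integrable_const δ) ?_
          intro x
          simpa [abs_sub_comm] using hhg₂ x
      _ = δ * (ν Set.univ).toReal := by simp [mul_comm, Measure.real]
      _ ≤ ε / 4 := by
          rw [hδdef]
          rw [div_mul_eq_mul_div, div_le_div_iff₀ (by positivity) (by norm_num)]
          have h0 : (0:ℝ) ≤ (ν Set.univ).toReal := ENNReal.toReal_nonneg
          nlinarith
  have hfh : ∫ x, ‖f x - h x‖ ∂ν ≤ ε / 2 := by
    have hintf : Integrable (fun x => ‖f x - g₂ x‖) ν :=
      (hfν.sub (hg₂cont.integrable_of_hasCompactSupport hg₂supp)).norm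
    have hinth : Integrable (fun x => ‖g₂ x - h x‖) ν :=
      ((hg₂cont.integrable_of_hasCompactSupport hg₂supp).sub
        (hhcont.integrable_of_hasCompactSupport hhsupp)).norm
    calc ∫ x, ‖f x - h x‖ ∂ν ≤ ∫ x, (‖f x - g₂ x‖ + ‖g₂ x - h x‖) ∂ν := by
          refine integral_mono ((hfν.sub
            (hhcont.integrable_of_hasCompactSupport hhsupp)).norm) (hintf.add hinth) ?_
          intro x
          simpa using norm_sub_le_norm_sub_add_norm_sub (f x) (g₂ x) (h x)
      _ = (∫ x, ‖f x - g₂ x‖ ∂ν) + ∫ x, ‖g₂ x - h x‖ ∂ν := integral_add hintf hinth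
      _ ≤ ε / 4 + ε / 4 := add_le_add hfg₂ hg₂h
      _ = ε / 2 := by ring
  have key : ∀ (μ : Measure ℝ) [IsFiniteMeasure μ], μ ≤ ν →
      |(∫ x, f x ∂μ) - ∫ x, h x ∂μ| ≤ ε / 2 := by
    intro μ _ hle
    have hfμ : Integrable f μ := int_of f μ hm.aestronglyMeasurable hb
    have hhμ : Integrable h μ := hhcont.integrable_of_hasCompactSupport hhsupp
    calc |(∫ x, f x ∂μ) - ∫ x, h x ∂μ| = |∫ x, (f x - h x) ∂μ| := by
          rw [integral_sub hfμ hhμ]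
      _ ≤ ∫ x, ‖f x - h x‖ ∂μ := by simpa using norm_integral_le_integral_norm (fun x => f x - h x) (μ := μ)
      _ ≤ ∫ x, ‖f x - h x‖ ∂ν := by
          refine integral_mono_measure hle (Filter.Eventually.of_forall fun x => norm_nonneg _) ?_
          exact (hfν.sub (hhcont.integrable_of_hasCompactSupport hhsupp)).norm
      _ ≤ ε / 2 := hfh
  have hd2 : |(∫ x, h x ∂μ₁) - ∫ x, h x ∂μ₂| ∈ S2 := ⟨h, hC2b, hhb, rfl⟩
  have hle1 : μ₁ ≤ ν := Measure.le_add_right le_rfl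
  have hle2 : μ₂ ≤ ν := by rw [hν, add_comm]; exact Measure.le_add_right le_rfl
  have := key μ₁ hle1
  have := key μ₂ hle2
  calc |(∫ x, f x ∂μ₁) - ∫ x, f x ∂μ₂|
      ≤ |(∫ x, h x ∂μ₁) - ∫ x, h x ∂μ₂| + (ε / 2 + ε / 2) := by
        have t := abs_sub_le ((∫ x, f x ∂μ₁) - ∫ x, h x ∂μ₁ + (∫ x, h x ∂μ₂ - ∫ x, f x ∂μ₂)) 0 0
        have e1 := key μ₁ hle1
        have e2 := key μ₂ hle2
        have : |(∫ x, f x ∂μ₁) - ∫ x, f x ∂μ₂| ≤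
            |(∫ x, h x ∂μ₁) - ∫ x, h x ∂μ₂| + |(∫ x, f x ∂μ₁) - ∫ x, h x ∂μ₁|
              + |(∫ x, f x ∂μ₂) - ∫ x, h x ∂μ₂| := by
          have := abs_add_le ((∫ x, h x ∂μ₁) - ∫ x, h x ∂μ₂)
            ((∫ x, f x ∂μ₁) - ∫ x, h x ∂μ₁ - ((∫ x, f x ∂μ₂) - ∫ x, h x ∂μ₂))
          have h2 := abs_sub ((∫ x, f x ∂μ₁) - ∫ x, h x ∂μ₁) ((∫ x, f x ∂μ₂) - ∫ x, h x ∂μ₂)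
          calc |(∫ x, f x ∂μ₁) - ∫ x, f x ∂μ₂|
              = |(∫ x, h x ∂μ₁) - ∫ x, h x ∂μ₂
                  + ((∫ x, f x ∂μ₁) - ∫ x, h x ∂μ₁ - ((∫ x, f x ∂μ₂) - ∫ x, h x ∂μ₂))| := by
                ring_nf
            _ ≤ _ := by
                refine le_trans (abs_add_le _ _) ?_
                linarith
        linarith
    _ ≤ sSup S2 + ε := by
        have := le_csSup hbdd2 hd2
        linarith
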